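/- Suppose G is a finite simple vertex decomposable graph such that Shed(G) is not a dominating set of G. Let x ∈ Shed(G), and let H be the graph with vertex set V(H) = V(G) ∪ {x'} (x' a new vertex) and edge set E(H) = E(G) ∪ {{x', y} : y ∈ N_G[x]} (so x' is adjacent to x and to every neighbour of x). Then H is vertex decomposable and Shed(H) is not a dominating set of H. -/
import Mathlib


open scoped Classical

variable {V : Type*}

/-- `S` is an independent set of the induced subgraph of `G` on the vertex set `A`. -/
def IsIndepIn (G : SimpleGraph V) (A S : Finset V) : Prop :=
  S ⊆ A ∧ ∀ u ∈ S, ∀ v ∈ S, ¬ G.Adj u v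

/-- `S` is a maximal independent set of the induced subgraph of `G` on the vertex set `A`. -/
def IsMaxIndepIn (G : SimpleGraph V) (A S : Finset V) : Prop :=
  IsIndepIn G A S ∧ ∀ T, IsIndepIn G A T → S ⊆ T → T = S

/-- The induced subgraph of `G` on the vertex set `A` is well-covered: all of its
maximal independent sets have the same cardinality. -/
def WellCoveredOn (G : SimpleGraph V) (A : Finset V) : Prop :=
  ∀ S T, IsMaxIndepIn G A S → IsMaxIndepIn G A T → S.card = T.card

/-- The closed neighbourhood of `x` deleted from `A`: the vertices of `A` distinct from `x`
and not adjacent to `x`. -/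
noncomputable def delClosedNbhd (G : SimpleGraph V) (A : Finset V) (x : V) : Finset V :=
  A.filter fun y => y ≠ x ∧ ¬ G.Adj x y

/-- The induced subgraph of `G` on the vertex set `A` is vertex decomposable: it is
well-covered, and either it has no edges, or some vertex `x ∈ A` is such that deleting `x`,
respectively the closed neighbourhood of `x`, leaves a vertex decomposable graph. -/
def VertexDecomposableOn (G : SimpleGraph V) (A : Finset V) : Prop :=
  WellCoveredOn G A ∧
    ((∀ u ∈ A, ∀ v ∈ A, ¬ G.Adj u v) ∨
      ∃ x, ∃ _h : x ∈ A,
        VertexDecomposableOn G (A.erase x) ∧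
        VertexDecomposableOn G (delClosedNbhd G A x))
termination_by A.card
decreasing_by
  · exact Finset.card_erase_lt_of_mem (by assumption)
  · exact Finset.card_lt_card
      (Finset.filter_ssubset.mpr ⟨x, by assumption, by simp⟩)

/-- A finite simple graph is well-covered if all of its maximal independent sets have the
same cardinality. -/
def WellCovered (G : SimpleGraph V) [Fintype V] : Prop :=
  WellCoveredOn G Finset.univ

/-- A finite simple graph is vertex decomposable. -/
def VertexDecomposable (G : SimpleGraph V) [Fintype V] : Prop :=
  VertexDecomposableOn G Finset.univ

/-- The set of shedding vertices of `G` : those vertices `x` such that both `G \ x` and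
`G \ N[x]` are vertex decomposable. -/
def Shed (G : SimpleGraph V) [Fintype V] : Set V :=
  {x | VertexDecomposableOn G (Finset.univ.erase x) ∧
       VertexDecomposableOn G (delClosedNbhd G Finset.univ x)}

/-- `D` is a dominating set of `G`: every vertex not in `D` is adjacent to a vertex of `D`. -/
def IsDominatingSet (G : SimpleGraph V) (D : Set V) : Prop :=
  ∀ v, v ∉ D → ∃ u ∈ D, G.Adj u v

/-- A vertex is simplicial if its neighbourhood induces a clique. -/
def IsSimplicialVertex (G : SimpleGraph V) (x : V) : Prop :=
  ∀ u v, G.Adj x u → G.Adj x v → u ≠ v → G.Adj u v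

/-- The graph `H` obtained from `G` by duplicating the vertex `x`: the new vertex `x'`
(represented by `none`) is adjacent to `x` and to every neighbour of `x`, and all edges of
`G` are kept among the old vertices (represented via `some`). -/
def dupVertex {V : Type*} (G : SimpleGraph V) (x : V) : SimpleGraph (Option V) :=
  SimpleGraph.fromRel fun p q =>
    match p, q with
    | some u, some v => G.Adj u v
    | none, some v => v = x ∨ G.Adj x v
    | _, _ => False

lemma VDO_iff (G : SimpleGraph V) (A : Finset V) :
    VertexDecomposableOn G A ↔ (WellCoveredOn G A ∧
    ((∀ u ∈ A, ∀ v ∈ A, ¬ G.Adj u v) ∨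
      ∃ x, ∃ _h : x ∈ A,
        VertexDecomposableOn G (A.erase x) ∧
        VertexDecomposableOn G (delClosedNbhd G A x))) := by
  rw [VertexDecomposableOn]

lemma vd_empty (G : SimpleGraph V) : VertexDecomposableOn G ∅ := by
  rw [VDO_iff]
  refine ⟨?_, Or.inl (by simp)⟩
  intro S T hS hT
  rw [Finset.subset_empty.1 hS.1.1, Finset.subset_empty.1 hT.1.1]

lemma mem_delClosedNbhd {G : SimpleGraph V} {A : Finset V} {x y : V} :
    y ∈ delClosedNbhd G A x ↔ y ∈ A ∧ y ≠ x ∧ ¬ G.Adj x y := Finset.mem_filter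

section Transfer

variable {W : Type*} {G : SimpleGraph V} {G' : SimpleGraph W} {f : V → W}

lemma maxIndep_transfer {A : Finset V} {B : Finset W}
    (hB : B = A.image f) (hinj : Set.InjOn f ↑A)
    (hadj : ∀ u ∈ A, ∀ v ∈ A, (G.Adj u v ↔ G'.Adj (f u) (f v)))
    {S : Finset W} (hS : IsMaxIndepIn G' B S) :
    IsMaxIndepIn G A (A.filter (fun a => f a ∈ S)) ∧
      (A.filter (fun a => f a ∈ S)).card = S.card := by
  set S0 := A.filter (fun a => f a ∈ S) with hS0
  have himg : S0.image f = S := by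
    apply Finset.Subset.antisymm
    · intro w hw
      rcases Finset.mem_image.1 hw with ⟨a, ha, rfl⟩
      exact (Finset.mem_filter.1 ha).2
    · intro w hw
      have hwB : w ∈ B := hS.1.1 hw
      rw [hB] at hwB
      rcases Finset.mem_image.1 hwB with ⟨a, ha, rfl⟩
      exact Finset.mem_image.2 ⟨a, Finset.mem_filter.2 ⟨ha, hw⟩, rfl⟩
  have hcard : S0.card = S.card := by
    rw [← himg]
    exact (Finset.card_image_of_injOn
      (fun a ha b hb => hinj (Finset.mem_filter.1 ha).1 (Finset.mem_filter.1 hb).1)).symm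
  refine ⟨⟨⟨Finset.filter_subset _ _, ?_⟩, ?_⟩, hcard⟩
  · intro u hu v hv hadjuv
    have hu' := Finset.mem_filter.1 hu
    have hv' := Finset.mem_filter.1 hv
    exact hS.1.2 _ hu'.2 _ hv'.2 ((hadj u hu'.1 v hv'.1).1 hadjuv)
  · intro T hT hsub
    have hTimg : IsIndepIn G' B (T.image f) := by
      constructor
      · intro w hw
        rcases Finset.mem_image.1 hw with ⟨a, ha, rfl⟩
        rw [hB]; exact Finset.mem_image.2 ⟨a, hT.1 ha, rfl⟩
      · intro u hu v hv
        rcases Finset.mem_image.1 hu with ⟨a, ha, rfl⟩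
        rcases Finset.mem_image.1 hv with ⟨b, hb, rfl⟩
        exact fun h => hT.2 a ha b hb ((hadj a (hT.1 ha) b (hT.1 hb)).2 h)
    have hST : S ⊆ T.image f := by
      rw [← himg]; exact Finset.image_subset_image hsub
    have heq := hS.2 _ hTimg hST
    apply Finset.Subset.antisymm _ hsub
    intro t ht
    refine Finset.mem_filter.2 ⟨hT.1 ht, ?_⟩
    rw [← heq]
    exact Finset.mem_image_of_mem f ht

lemma wellCovered_transfer {A : Finset V} {B : Finset W}
    (hB : B = A.image f) (hinj : Set.InjOn f ↑A)
    (hadj : ∀ u ∈ A, ∀ v ∈ A, (G.Adj u v ↔ G'.Adj (f u) (f v)))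
    (h : WellCoveredOn G A) : WellCoveredOn G' B := by
  intro S T hS hT
  obtain ⟨hS0, hcS⟩ := maxIndep_transfer hB hinj hadj hS
  obtain ⟨hT0, hcT⟩ := maxIndep_transfer hB hinj hadj hT
  rw [← hcS, ← hcT]
  exact h _ _ hS0 hT0

lemma vd_transfer : ∀ (n : ℕ) (A : Finset V) (B : Finset W), A.card ≤ n →
    B = A.image f → Set.InjOn f ↑A →
    (∀ u ∈ A, ∀ v ∈ A, (G.Adj u v ↔ G'.Adj (f u) (f v))) →
    VertexDecomposableOn G A → VertexDecomposableOn G' B := by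
  intro n
  induction n with
  | zero =>
    intro A B hA hB _ _ _
    have hAe : A = ∅ := Finset.card_eq_zero.1 (le_antisymm hA (Nat.zero_le _))
    rw [hAe, Finset.image_empty] at hB
    rw [hB]
    exact vd_empty G'
  | succ n ih =>
    intro A B hA hB hinj hadj hvd
    rw [VDO_iff] at hvd ⊢
    obtain ⟨hwc, hc⟩ := hvd
    refine ⟨wellCovered_transfer hB hinj hadj hwc, ?_⟩
    rcases hc with hedge | ⟨z, hz, h1, h2⟩
    · left
      intro u hu v hv hadj'
      rw [hB] at hu hv
      obtain ⟨a, ha, rfl⟩ := Finset.mem_image.1 hu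
      obtain ⟨b, hbm, rfl⟩ := Finset.mem_image.1 hv
      exact hedge a ha b hbm ((hadj a ha b hbm).2 hadj')
    · right
      refine ⟨f z, ?_, ?_, ?_⟩
      · rw [hB]; exact Finset.mem_image_of_mem f hz
      · have herase : B.erase (f z) = (A.erase z).image f := by
          ext w
          simp only [Finset.mem_erase, hB, Finset.mem_image]
          constructor
          · rintro ⟨hne, a, ha, rfl⟩
            exact ⟨a, ⟨fun h => hne (by rw [h]), ha⟩, rfl⟩
          · rintro ⟨a, ⟨haz, ha⟩, rfl⟩
            exact ⟨fun h => haz (hinj ha hz h), a, ha, rfl⟩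
        rw [herase]
        refine ih (A.erase z) _ ?_ rfl (hinj.mono (Finset.coe_subset.2 (Finset.erase_subset _ _))) ?_ h1
        · have := Finset.card_erase_of_mem hz; omega
        · intro u hu v hv
          exact hadj u (Finset.mem_of_mem_erase hu) v (Finset.mem_of_mem_erase hv)
      · have hdel : delClosedNbhd G' B (f z) = (delClosedNbhd G A z).image f := by
          ext w
          simp only [delClosedNbhd, Finset.mem_filter, hB, Finset.mem_image]
          constructor
          · rintro ⟨⟨a, ha, rfl⟩, hne, hnadj⟩
            exact ⟨a, ⟨ha, fun h => hne (by rw [h]), fun h => hnadj ((hadj z hz a ha).1 h)⟩, rfl⟩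
          · rintro ⟨a, ⟨ha, haz, hnadj⟩, rfl⟩
            exact ⟨⟨a, ha, rfl⟩, fun h => haz (hinj ha hz h), fun h => hnadj ((hadj z hz a ha).2 h)⟩
        rw [hdel]
        have hsubz : delClosedNbhd G A z ⊆ A.erase z := fun w hw =>
          Finset.mem_erase.2 ⟨(Finset.mem_filter.1 hw).2.1, (Finset.mem_filter.1 hw).1⟩
        refine ih _ _ ?_ rfl (hinj.mono (Finset.coe_subset.2 (Finset.filter_subset _ _))) ?_ h2
        · have h1c := Finset.card_le_card hsubz
          have := Finset.card_erase_of_mem hz; omega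
        · intro u hu v hv
          exact hadj u (Finset.filter_subset _ _ hu) v (Finset.filter_subset _ _ hv)

lemma vd_transfer' (f : V → W) (A : Finset V) (B : Finset W)
    (hmem : ∀ p, p ∈ B ↔ ∃ a ∈ A, f a = p)
    (hinj : Set.InjOn f ↑A)
    (hadj : ∀ u ∈ A, ∀ v ∈ A, (G.Adj u v ↔ G'.Adj (f u) (f v))) :
    VertexDecomposableOn G A → VertexDecomposableOn G' B := by
  have hB : B = A.image f := Finset.ext (fun p => by
    rw [hmem p, Finset.mem_image])
  exact vd_transfer A.card A B le_rfl hB hinj hadj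

end Transfer

section Twin

variable {W : Type*} {G' : SimpleGraph W} {a b : W}

lemma maxIndep_twin_erase (hab : G'.Adj a b)
    (htw : ∀ w, w ≠ a → w ≠ b → (G'.Adj a w ↔ G'.Adj b w))
    {A : Finset W} (ha : a ∈ A) {S : Finset W}
    (hS : IsMaxIndepIn G' (A.erase b) S) : IsMaxIndepIn G' A S := by
  refine ⟨⟨hS.1.1.trans (Finset.erase_subset _ _), hS.1.2⟩, ?_⟩
  intro T hT hsub
  by_cases hbT : b ∈ T
  · exfalso
    have haT : a ∉ T := fun haT => hT.2 a haT b hbT hab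
    have habne : a ≠ b := G'.ne_of_adj hab
    have hT'ind : IsIndepIn G' (A.erase b) (insert a (T.erase b)) := by
      constructor
      · intro t ht
        rcases Finset.mem_insert.1 ht with rfl | ht'
        · exact Finset.mem_erase.2 ⟨habne, ha⟩
        · obtain ⟨h1, h2⟩ := Finset.mem_erase.1 ht'
          exact Finset.mem_erase.2 ⟨h1, hT.1 h2⟩
      · intro u hu v hv huv
        rcases Finset.mem_insert.1 hu with rfl | hu' <;>
          rcases Finset.mem_insert.1 hv with rfl | hv'
        · exact G'.irrefl huv
        · obtain ⟨hvb, hvT⟩ := Finset.mem_erase.1 hv'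
          rcases eq_or_ne v u with rfl | hva
          · exact G'.irrefl huv
          · exact hT.2 b hbT v hvT ((htw v hva hvb).1 huv)
        · obtain ⟨hub, huT⟩ := Finset.mem_erase.1 hu'
          rcases eq_or_ne u v with rfl | hua
          · exact G'.irrefl huv
          · exact hT.2 u huT b hbT (((htw u hua hub).1 huv.symm).symm)
        · exact hT.2 u (Finset.mem_of_mem_erase hu') v (Finset.mem_of_mem_erase hv') huv
    have hsub' : S ⊆ insert a (T.erase b) := by
      intro s hs
      have hsb : s ≠ b := (Finset.mem_erase.1 (hS.1.1 hs)).1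
      exact Finset.mem_insert.2 (Or.inr (Finset.mem_erase.2 ⟨hsb, hsub hs⟩))
    have heq := hS.2 _ hT'ind hsub'
    have haS : a ∈ S := heq ▸ Finset.mem_insert_self a _
    exact haT (hsub haS)
  · exact hS.2 T ⟨fun t ht => Finset.mem_erase.2 ⟨fun h => hbT (h ▸ ht), hT.1 ht⟩, hT.2⟩ hsub

lemma vd_twin_erase (hab : G'.Adj a b)
    (htw : ∀ w, w ≠ a → w ≠ b → (G'.Adj a w ↔ G'.Adj b w)) :
    ∀ (n : ℕ) (A : Finset W), A.card ≤ n → a ∈ A → b ∈ A →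
    VertexDecomposableOn G' A → VertexDecomposableOn G' (A.erase b) := by
  intro n
  induction n with
  | zero =>
    intro A hA ha _ _
    exact absurd (Finset.card_pos.2 ⟨a, ha⟩) (by omega)
  | succ n ih =>
    intro A hA ha hb hvd
    rw [VDO_iff] at hvd
    obtain ⟨hwc, hc⟩ := hvd
    have hwc' : WellCoveredOn G' (A.erase b) := fun S T hS hT =>
      hwc S T (maxIndep_twin_erase hab htw ha hS) (maxIndep_twin_erase hab htw ha hT)
    rcases hc with hedge | ⟨z, hz, h1, h2⟩
    · exact absurd hab (hedge a ha b hb)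
    rcases eq_or_ne z b with hzb' | hzb
    · rw [hzb'] at h1; exact h1
    rcases eq_or_ne z a with hza' | hza
    · rw [hza'] at h1
      -- swap a and b
      have himgA : A.image (Equiv.swap a b) = A := by
        ext w
        simp only [Finset.mem_image]
        constructor
        · rintro ⟨u, hu, rfl⟩
          rcases eq_or_ne u a with rfl | hua
          · rwa [Equiv.swap_apply_left]
          rcases eq_or_ne u b with rfl | hub
          · rwa [Equiv.swap_apply_right]
          · rwa [Equiv.swap_apply_of_ne_of_ne hua hub]
        · intro hw
          refine ⟨Equiv.swap a b w, ?_, Equiv.swap_apply_self a b w⟩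
          rcases eq_or_ne w a with rfl | hwa
          · rwa [Equiv.swap_apply_left]
          rcases eq_or_ne w b with rfl | hwb
          · rwa [Equiv.swap_apply_right]
          · rwa [Equiv.swap_apply_of_ne_of_ne hwa hwb]
      have herase : A.erase b = (A.erase a).image (Equiv.swap a b) := by
        rw [Finset.image_erase (Equiv.injective _), himgA, Equiv.swap_apply_left]
      refine vd_transfer (A.erase a).card _ _ le_rfl herase (Equiv.injective _).injOn ?_ h1
      intro u hu v hv
      have hu' : u ≠ a := (Finset.mem_erase.1 hu).1
      have hv' : v ≠ a := (Finset.mem_erase.1 hv).1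
      rcases eq_or_ne u b with hub' | hub <;> rcases eq_or_ne v b with hvb' | hvb
      · rw [hub', hvb', Equiv.swap_apply_right]
        exact iff_of_false G'.irrefl G'.irrefl
      · rw [hub', Equiv.swap_apply_right, Equiv.swap_apply_of_ne_of_ne hv' hvb]
        exact (htw v hv' hvb).symm
      · rw [hvb', Equiv.swap_apply_right, Equiv.swap_apply_of_ne_of_ne hu' hub]
        constructor
        · intro h; exact ((htw u hu' hub).2 h.symm).symm
        · intro h; exact ((htw u hu' hub).1 h.symm).symm
      · rw [Equiv.swap_apply_of_ne_of_ne hu' hub, Equiv.swap_apply_of_ne_of_ne hv' hvb]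
    · rw [VDO_iff]
      refine ⟨hwc', Or.inr ⟨z, Finset.mem_erase.2 ⟨hzb, hz⟩, ?_, ?_⟩⟩
      · rw [Finset.erase_right_comm]
        refine ih (A.erase z) ?_ (Finset.mem_erase.2 ⟨Ne.symm hza, ha⟩)
          (Finset.mem_erase.2 ⟨Ne.symm hzb, hb⟩) h1
        have := Finset.card_erase_of_mem hz; omega
      · have hdeq : delClosedNbhd G' (A.erase b) z = (delClosedNbhd G' A z).erase b := by
          ext w
          simp only [delClosedNbhd, Finset.mem_filter, Finset.mem_erase]
          tauto
        rw [hdeq]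
        by_cases hzadjb : G'.Adj z b
        · rw [Finset.erase_eq_of_notMem (fun hmem => (Finset.mem_filter.1 hmem).2.2 hzadjb)]
          exact h2
        · refine ih (delClosedNbhd G' A z) ?_ ?_ ?_ h2
          · have hsubz : delClosedNbhd G' A z ⊆ A.erase z := fun w hw =>
              Finset.mem_erase.2 ⟨(Finset.mem_filter.1 hw).2.1, (Finset.mem_filter.1 hw).1⟩
            have h1c := Finset.card_le_card hsubz
            have := Finset.card_erase_of_mem hz
            omega
          · refine Finset.mem_filter.2 ⟨ha, Ne.symm hza, ?_⟩
            intro hza'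
            exact hzadjb (((htw z hza hzb).1 hza'.symm).symm)
          · exact Finset.mem_filter.2 ⟨hb, Ne.symm hzb, hzadjb⟩

end Twin

section Dup

lemma dup_adj_some_some (G : SimpleGraph V) (x u v : V) :
    (dupVertex G x).Adj (some u) (some v) ↔ G.Adj u v := by
  simp only [dupVertex, SimpleGraph.fromRel_adj]
  constructor
  · rintro ⟨hne, h | h⟩
    · exact h
    · exact h.symm
  · intro h
    exact ⟨fun hh => G.ne_of_adj h (Option.some_injective V hh), Or.inl h⟩

lemma dup_adj_none_some (G : SimpleGraph V) (x v : V) :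
    (dupVertex G x).Adj none (some v) ↔ (v = x ∨ G.Adj x v) := by
  simp only [dupVertex, SimpleGraph.fromRel_adj]
  constructor
  · rintro ⟨hne, h | h⟩
    · exact h
    · exact h.elim
  · intro h
    exact ⟨by simp, Or.inl h⟩

end Dup

section WCDup

lemma wc_dup [Fintype V] (G : SimpleGraph V) (x : V) (hwcg : WellCovered G) :
    WellCovered (dupVertex G x) := by
  have hss : ∀ u v : V, (dupVertex G x).Adj (some u) (some v) ↔ G.Adj u v :=
    fun u v => dup_adj_some_some G x u v
  have hns : ∀ v : V, (dupVertex G x).Adj none (some v) ↔ (v = x ∨ G.Adj x v) :=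
    fun v => dup_adj_none_some G x v
  have swapA : ∀ S : Finset (Option V), IsMaxIndepIn (dupVertex G x) Finset.univ S → none ∈ S →
      IsMaxIndepIn (dupVertex G x) Finset.univ (insert (some x) (S.erase none)) ∧
      (insert (some x) (S.erase none)).card = S.card := by
    intro S hS hnS
    have noadj : ∀ w ∈ S, w ≠ none → ∃ y, w = some y ∧ y ≠ x ∧ ¬ G.Adj x y := by
      intro w hw hwn
      obtain ⟨y, rfl⟩ := Option.ne_none_iff_exists'.1 hwn
      refine ⟨y, rfl, ?_, ?_⟩
      · rintro rfl
        exact hS.1.2 none hnS (some y) hw ((hns y).2 (Or.inl rfl))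
      · intro h
        exact hS.1.2 none hnS (some y) hw ((hns y).2 (Or.inr h))
    have hxS : some x ∉ S := by
      intro h
      obtain ⟨y, hy, hyx, -⟩ := noadj (some x) h (by simp)
      exact hyx (Option.some_injective V hy).symm
    have hxS' : some x ∉ S.erase none := fun h => hxS (Finset.mem_of_mem_erase h)
    have hcard : (insert (some x) (S.erase none)).card = S.card := by
      rw [Finset.card_insert_of_notMem hxS', Finset.card_erase_of_mem hnS]
      have : 0 < S.card := Finset.card_pos.2 ⟨none, hnS⟩
      omega
    have hind : IsIndepIn (dupVertex G x) Finset.univ (insert (some x) (S.erase none)) := by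
      refine ⟨Finset.subset_univ _, ?_⟩
      intro u hu v hv huv
      rcases Finset.mem_insert.1 hu with rfl | hu' <;>
        rcases Finset.mem_insert.1 hv with rfl | hv'
      · exact (dupVertex G x).irrefl huv
      · obtain ⟨hvn, hvS⟩ := Finset.mem_erase.1 hv'
        obtain ⟨y, rfl, hyx, hyadj⟩ := noadj v hvS hvn
        exact hyadj ((hss x y).1 huv)
      · obtain ⟨hun, huS⟩ := Finset.mem_erase.1 hu'
        obtain ⟨y, rfl, hyx, hyadj⟩ := noadj u huS hun
        exact hyadj ((hss y x).1 huv).symm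
      · exact hS.1.2 u (Finset.mem_of_mem_erase hu') v (Finset.mem_of_mem_erase hv') huv
    refine ⟨⟨hind, ?_⟩, hcard⟩
    intro T hT hsub
    have hxT : some x ∈ T := hsub (Finset.mem_insert_self _ _)
    have hnT : none ∉ T := fun hnT => hT.2 none hnT (some x) hxT ((hns x).2 (Or.inl rfl))
    have hT'' : IsIndepIn (dupVertex G x) Finset.univ (insert none (T.erase (some x))) := by
      refine ⟨Finset.subset_univ _, ?_⟩
      intro u hu v hv huv
      rcases Finset.mem_insert.1 hu with rfl | hu' <;>
        rcases Finset.mem_insert.1 hv with rfl | hv'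
      · exact (dupVertex G x).irrefl huv
      · obtain ⟨hvx, hvT⟩ := Finset.mem_erase.1 hv'
        rcases v with _ | y
        · exact (dupVertex G x).irrefl huv
        · rcases (hns y).1 huv with rfl | h
          · exact hvx rfl
          · exact hT.2 (some x) hxT (some y) hvT ((hss x y).2 h)
      · obtain ⟨hux, huT⟩ := Finset.mem_erase.1 hu'
        rcases u with _ | y
        · exact (dupVertex G x).irrefl huv
        · rcases (hns y).1 huv.symm with rfl | h
          · exact hux rfl
          · exact hT.2 (some x) hxT (some y) huT ((hss x y).2 h)
      · exact hT.2 u (Finset.mem_of_mem_erase hu') v (Finset.mem_of_mem_erase hv') huv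
    have hsub'' : S ⊆ insert none (T.erase (some x)) := by
      intro s hs
      rcases eq_or_ne s none with rfl | hsn
      · exact Finset.mem_insert_self _ _
      · have hsx : s ≠ some x := fun h => hxS (h ▸ hs)
        have hsT : s ∈ T := hsub (Finset.mem_insert.2 (Or.inr (Finset.mem_erase.2 ⟨hsn, hs⟩)))
        exact Finset.mem_insert.2 (Or.inr (Finset.mem_erase.2 ⟨hsx, hsT⟩))
    have heq := hS.2 _ hT'' hsub''
    apply Finset.Subset.antisymm _ hsub
    intro t ht
    rcases eq_or_ne t (some x) with rfl | htx
    · exact Finset.mem_insert_self _ _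
    · have htn : t ≠ none := fun h => hnT (h ▸ ht)
      have htS : t ∈ S := by
        rw [← heq]
        exact Finset.mem_insert.2 (Or.inr (Finset.mem_erase.2 ⟨htx, ht⟩))
      exact Finset.mem_insert.2 (Or.inr (Finset.mem_erase.2 ⟨htn, htS⟩))
  have liftB : ∀ S : Finset (Option V), IsMaxIndepIn (dupVertex G x) Finset.univ S → none ∉ S →
      ∃ S0 : Finset V, IsMaxIndepIn G Finset.univ S0 ∧ S0.card = S.card := by
    intro S hS hnS
    refine ⟨Finset.univ.filter (fun a => some a ∈ S), ⟨⟨Finset.subset_univ _, ?_⟩, ?_⟩, ?_⟩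
    · intro u hu v hv huv
      exact hS.1.2 (some u) ((Finset.mem_filter.1 hu).2) (some v) ((Finset.mem_filter.1 hv).2)
        ((hss u v).2 huv)
    · intro T hT hsub
      have hTind : IsIndepIn (dupVertex G x) Finset.univ (T.image some) := by
        refine ⟨Finset.subset_univ _, ?_⟩
        intro u hu v hv huv
        obtain ⟨a, ha, rfl⟩ := Finset.mem_image.1 hu
        obtain ⟨c, hcm, rfl⟩ := Finset.mem_image.1 hv
        exact hT.2 a ha c hcm ((hss a c).1 huv)
      have hsub2 : S ⊆ T.image some := by
        intro s hs
        have hsn : s ≠ none := fun h => hnS (h ▸ hs)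
        obtain ⟨y, rfl⟩ := Option.ne_none_iff_exists'.1 hsn
        have hy : y ∈ Finset.univ.filter (fun a => some a ∈ S) :=
          Finset.mem_filter.2 ⟨Finset.mem_univ _, hs⟩
        exact Finset.mem_image_of_mem some (hsub hy)
      have heq := hS.2 _ hTind hsub2
      apply Finset.Subset.antisymm _ hsub
      intro t ht
      refine Finset.mem_filter.2 ⟨Finset.mem_univ _, ?_⟩
      rw [← heq]
      exact Finset.mem_image_of_mem some ht
    · rw [← Finset.card_image_of_injective _ (Option.some_injective V)]
      congr 1
      apply Finset.Subset.antisymm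
      · intro w hw
        obtain ⟨a, ha, rfl⟩ := Finset.mem_image.1 hw
        exact (Finset.mem_filter.1 ha).2
      · intro w hw
        have hwn : w ≠ none := fun h => hnS (h ▸ hw)
        obtain ⟨y, rfl⟩ := Option.ne_none_iff_exists'.1 hwn
        exact Finset.mem_image.2 ⟨y, Finset.mem_filter.2 ⟨Finset.mem_univ _, hw⟩, rfl⟩
  intro S T hS hT
  have hnorm : ∀ S : Finset (Option V), IsMaxIndepIn (dupVertex G x) Finset.univ S →
      ∃ S1, IsMaxIndepIn (dupVertex G x) Finset.univ S1 ∧ S1.card = S.card ∧ none ∉ S1 := by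
    intro S hS
    by_cases hn : none ∈ S
    · obtain ⟨h1, h2⟩ := swapA S hS hn
      exact ⟨_, h1, h2, by simp⟩
    · exact ⟨S, hS, rfl, hn⟩
  obtain ⟨S1, hS1, hcS1, hS1n⟩ := hnorm S hS
  obtain ⟨T1, hT1, hcT1, hT1n⟩ := hnorm T hT
  obtain ⟨S0, hS0, hcS0⟩ := liftB S1 hS1 hS1n
  obtain ⟨T0, hT0, hcT0⟩ := liftB T1 hT1 hT1n
  rw [← hcS1, ← hcS0, ← hcT1, ← hcT0]
  exact hwcg S0 T0 hS0 hT0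

end WCDup

/-- If `G` is vertex decomposable and `Shed(G)` is not a dominating set, and
`x ∈ Shed(G)`, then the graph `H` obtained from `G` by duplicating `x` is vertex
decomposable and `Shed(H)` is not a dominating set of `H`. -/
theorem statement18 {V : Type*} [Fintype V] (G : SimpleGraph V)
    (hvd : VertexDecomposable G) (hnd : ¬ IsDominatingSet G (Shed G))
    (x : V) (hx : x ∈ Shed G) :
    VertexDecomposable (dupVertex G x) ∧
    ¬ IsDominatingSet (dupVertex G x) (Shed (dupVertex G x)) := by
  letI : DecidableEq (Option V) := fun a b => Classical.propDecidable (a = b)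
  have hvd' : VertexDecomposableOn G Finset.univ := hvd
  have hx2 : VertexDecomposableOn G (delClosedNbhd G Finset.univ x) := hx.2
  have hWCG : WellCovered G := ((VDO_iff G _).1 hvd').1
  have toSome' : ∀ (t : Finset (Option V)) (s : Finset V),
      (∀ p, p ∈ t ↔ ∃ a ∈ s, some a = p) →
      VertexDecomposableOn G s → VertexDecomposableOn (dupVertex G x) t := by
    intro t s hmem hvds
    exact vd_transfer' some s t hmem (Option.some_injective V).injOn
      (fun u _ v _ => (dup_adj_some_some G x u v).symm) hvds
  have ofSome' : ∀ (t : Finset (Option V)) (s : Finset V),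
      (∀ p : Option V, p ∈ t ↔ ∃ a ∈ s, some a = p) →
      VertexDecomposableOn (dupVertex G x) t → VertexDecomposableOn G s := by
    intro t s hmem hvdt
    refine vd_transfer' (fun o => Option.getD o x) t s ?_ ?_ ?_ hvdt
    · intro p
      constructor
      · intro hp
        exact ⟨some p, (hmem _).2 ⟨p, hp, rfl⟩, rfl⟩
      · rintro ⟨a, hat, rfl⟩
        obtain ⟨c, hcs, rfl⟩ := (hmem a).1 hat
        simpa using hcs
    · intro p hp q hq hpq
      rw [Finset.mem_coe] at hp hq
      obtain ⟨c, -, rfl⟩ := (hmem p).1 hp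
      obtain ⟨d, -, rfl⟩ := (hmem q).1 hq
      simpa using hpq
    · intro u hu v hv
      obtain ⟨c, -, rfl⟩ := (hmem u).1 hu
      obtain ⟨d, -, rfl⟩ := (hmem v).1 hv
      simpa using dup_adj_some_some G x c d
  -- twin structure: `some x` and `none`
  have habH : (dupVertex G x).Adj (some x) none :=
    ((dup_adj_none_some G x x).2 (Or.inl rfl)).symm
  have htwH : ∀ p : Option V, p ≠ some x → p ≠ none →
      ((dupVertex G x).Adj (some x) p ↔ (dupVertex G x).Adj none p) := by
    intro p hpx hpn
    obtain ⟨y, rfl⟩ := Option.ne_none_iff_exists'.1 hpn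
    have hyx : y ≠ x := fun h => hpx (by rw [h])
    rw [dup_adj_some_some, dup_adj_none_some]
    simp [hyx]
  -- H is vertex decomposable, with shedding vertex `none`
  have hVDH : VertexDecomposable (dupVertex G x) := by
    show VertexDecomposableOn (dupVertex G x) Finset.univ
    rw [VDO_iff]
    refine ⟨wc_dup G x hWCG, Or.inr ⟨none, Finset.mem_univ _, ?_, ?_⟩⟩
    · refine toSome' _ Finset.univ ?_ hvd'
      intro p
      constructor
      · intro hp
        obtain ⟨hpn, -⟩ := Finset.mem_erase.1 hp
        obtain ⟨y, rfl⟩ := Option.ne_none_iff_exists'.1 hpn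
        exact ⟨y, Finset.mem_univ _, rfl⟩
      · rintro ⟨a, -, rfl⟩
        exact Finset.mem_erase.2 ⟨by simp, Finset.mem_univ _⟩
    · refine toSome' _ (delClosedNbhd G Finset.univ x) ?_ hx2
      intro p
      constructor
      · intro hp
        obtain ⟨-, hpn, hpadj⟩ := mem_delClosedNbhd.1 hp
        obtain ⟨y, rfl⟩ := Option.ne_none_iff_exists'.1 hpn
        rw [dup_adj_none_some] at hpadj
        push_neg at hpadj
        exact ⟨y, mem_delClosedNbhd.2 ⟨Finset.mem_univ _, hpadj.1, hpadj.2⟩, rfl⟩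
      · rintro ⟨a, ha, rfl⟩
        obtain ⟨-, hax, haadj⟩ := mem_delClosedNbhd.1 ha
        refine mem_delClosedNbhd.2 ⟨Finset.mem_univ _, by simp, ?_⟩
        rw [dup_adj_none_some]
        rintro (rfl | h)
        · exact hax rfl
        · exact haadj h
  refine ⟨hVDH, ?_⟩
  -- shedding vertices of H (other than the twins) come from shedding vertices of G
  have shedTrans : ∀ w : V, w ≠ x → some w ∈ Shed (dupVertex G x) → w ∈ Shed G := by
    intro w hwx hw
    constructor
    · have h1 := vd_twin_erase habH htwH _ _ le_rfl
        (by
          exact Finset.mem_erase.2 ⟨fun h => hwx (Option.some_injective V h).symm, Finset.mem_univ _⟩)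
        (by exact Finset.mem_erase.2 ⟨by simp, Finset.mem_univ _⟩) hw.1
      refine ofSome' _ (Finset.univ.erase w) ?_ h1
      intro p
      constructor
      · intro hp
        obtain ⟨hpn, hp'⟩ := Finset.mem_erase.1 hp
        obtain ⟨y, rfl⟩ := Option.ne_none_iff_exists'.1 hpn
        obtain ⟨hyw, -⟩ := Finset.mem_erase.1 hp'
        refine ⟨y, Finset.mem_erase.2 ⟨?_, Finset.mem_univ _⟩, rfl⟩
        intro h; exact hyw (by rw [h])
      · rintro ⟨a, ha, rfl⟩
        obtain ⟨haw, -⟩ := Finset.mem_erase.1 ha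
        exact Finset.mem_erase.2 ⟨by simp, Finset.mem_erase.2
          ⟨fun h => haw (Option.some_injective V h), Finset.mem_univ _⟩⟩
    · by_cases hA : G.Adj w x
      · refine ofSome' _ (delClosedNbhd G Finset.univ w) ?_ hw.2
        intro p
        constructor
        · intro hp
          obtain ⟨-, hpn, hpadj⟩ := mem_delClosedNbhd.1 hp
          have hpnone : p ≠ none := by
            rintro rfl
            exact hpadj (((dup_adj_none_some G x w).2 (Or.inr hA.symm)).symm)
          obtain ⟨y, rfl⟩ := Option.ne_none_iff_exists'.1 hpnone
          rw [dup_adj_some_some] at hpadj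
          refine ⟨y, mem_delClosedNbhd.2 ⟨Finset.mem_univ _, ?_, hpadj⟩, rfl⟩
          intro h; exact hpn (by rw [h])
        · rintro ⟨a, ha, rfl⟩
          obtain ⟨-, haw, haadj⟩ := mem_delClosedNbhd.1 ha
          refine mem_delClosedNbhd.2 ⟨Finset.mem_univ _,
            fun h => haw (Option.some_injective V h), ?_⟩
          rw [dup_adj_some_some]
          exact haadj
      · have h2 := vd_twin_erase habH htwH _ _ le_rfl
          (by
            exact mem_delClosedNbhd.2 ⟨Finset.mem_univ _,
              fun h => hwx (Option.some_injective V h).symm,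
              fun h => hA ((dup_adj_some_some G x w x).1 h)⟩)
          (by
            exact mem_delClosedNbhd.2 ⟨Finset.mem_univ _, by simp,
              fun h => ((dup_adj_none_some G x w).1 h.symm).elim
                (fun hh => hwx hh) (fun hh => hA hh.symm)⟩) hw.2
        refine ofSome' _ (delClosedNbhd G Finset.univ w) ?_ h2
        intro p
        constructor
        · intro hp
          obtain ⟨hpn, hp'⟩ := Finset.mem_erase.1 hp
          obtain ⟨y, rfl⟩ := Option.ne_none_iff_exists'.1 hpn
          obtain ⟨-, hyw, hyadj⟩ := mem_delClosedNbhd.1 hp'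
          rw [dup_adj_some_some] at hyadj
          refine ⟨y, mem_delClosedNbhd.2 ⟨Finset.mem_univ _, ?_, hyadj⟩, rfl⟩
          intro h; exact hyw (by rw [h])
        · rintro ⟨a, ha, rfl⟩
          obtain ⟨-, haw, haadj⟩ := mem_delClosedNbhd.1 ha
          refine Finset.mem_erase.2 ⟨by simp, mem_delClosedNbhd.2 ⟨Finset.mem_univ _,
            fun h => haw (Option.some_injective V h), ?_⟩⟩
          rw [dup_adj_some_some]
          exact haadj
  -- the witness of non-domination
  rw [IsDominatingSet] at hnd
  push_neg at hnd
  obtain ⟨v, hvS, hvadj⟩ := hnd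
  have hxv : ¬ G.Adj x v := hvadj x hx
  have hxvne : x ≠ v := fun h => hvS (h ▸ hx)
  intro hdom
  have hnotshed : (some v : Option V) ∉ Shed (dupVertex G x) := by
    intro h
    exact hvS (shedTrans v (Ne.symm hxvne) h)
  obtain ⟨u, huShed, huadj⟩ := hdom (some v) hnotshed
  cases u with
  | none =>
    rcases (dup_adj_none_some G x v).1 huadj with h | h
    · exact hxvne h.symm
    · exact hxv h
  | some w =>
    have hwv : G.Adj w v := (dup_adj_some_some G x w v).1 huadj
    have hwx : w ≠ x := fun h => hxv (h ▸ hwv)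
    exact hvadj w (shedTrans w hwx huShed) hwv
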